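/- Let W be a nonnegative random variable, let B > 0 and λ > 0, and suppose W ≤ B almost surely and E[W²] ≤ (B²/16) e^{−λB}. Then for every z ≥ 0, P[ W ≥ z ] ≤ 2 e^{−λ z}. -/

import Mathlib

open MeasureTheory

lemma exp_ge_sq_div_four (x : ℝ) (hx : 0 ≤ x) : x ^ 2 / 4 ≤ Real.exp x := by
  have h := Real.add_one_le_exp (x / 2)
  have h2 : Real.exp (x / 2) * Real.exp (x / 2) = Real.exp x := by
    rw [← Real.exp_add]; ring_nf
  nlinarith [Real.exp_pos (x / 2)]

lemma key_ineq (t : ℝ) (ht : 1 ≤ t) : t ^ 2 ≤ 16 * Real.exp (t * Real.log 2) := by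
  have hl : (0.6931 : ℝ) ≤ Real.log 2 := by
    have := Real.log_two_gt_d9; norm_num at this ⊢; linarith
  have hx : 0 ≤ t * Real.log 2 := by positivity
  have h := exp_ge_sq_div_four (t * Real.log 2) hx
  have hl2 : (0.48 : ℝ) ≤ Real.log 2 ^ 2 := by nlinarith
  nlinarith [h, hl2, sq_nonneg t, mul_le_mul_of_nonneg_left hl2 (sq_nonneg t)]

/-- A nonnegative random variable bounded by `B` with `E[W²] ≤ (B²/16) e^{−λB}` satisfies the
sub-exponential tail bound `P[W ≥ z] ≤ 2 e^{−λz}` for all `z ≥ 0`. -/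
theorem stmt8 {Ω : Type*} [MeasurableSpace Ω] (P : Measure Ω) [IsProbabilityMeasure P]
    (W : Ω → ℝ) (hWmeas : Measurable W) (B lam : ℝ) (hB : 0 < B) (hlam : 0 < lam)
    (hW0 : ∀ᵐ ω ∂P, 0 ≤ W ω) (hWB : ∀ᵐ ω ∂P, W ω ≤ B)
    (hmom : ∫ ω, (W ω) ^ 2 ∂P ≤ B ^ 2 / 16 * Real.exp (-lam * B)) :
    ∀ z : ℝ, 0 ≤ z → (P {ω | z ≤ W ω}).toReal ≤ 2 * Real.exp (-lam * z) := by
  intro z hz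
  -- case z > B : measure zero
  by_cases hzB : B < z
  · have hnull : P {ω | z ≤ W ω} = 0 := by
      refine measure_mono_null (?_ : _ ⊆ {ω | ¬ W ω ≤ B}) (ae_iff.mp hWB)
      intro ω hω
      simp only [Set.mem_setOf_eq] at *
      linarith
    rw [hnull]
    simp only [ENNReal.toReal_zero]
    positivity
  push_neg at hzB
  by_cases hsmall : lam * z ≤ Real.log 2
  · -- trivial bound by 1
    have h1 : (P {ω | z ≤ W ω}).toReal ≤ 1 := by
      have := prob_le_one (μ := P) (s := {ω | z ≤ W ω})
      simpa using ENNReal.toReal_mono (by norm_num) this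
    have h2 : (1 : ℝ) ≤ 2 * Real.exp (-lam * z) := by
      have : Real.exp (-Real.log 2) ≤ Real.exp (-lam * z) :=
        Real.exp_le_exp.mpr (by linarith)
      rw [Real.exp_neg, Real.exp_log (by norm_num : (0:ℝ) < 2)] at this
      linarith
    linarith
  push_neg at hsmall
  have hlog2 : (0:ℝ) < Real.log 2 := Real.log_pos (by norm_num)
  have hzpos : 0 < z := by
    by_contra h
    push_neg at h
    nlinarith
  -- Chebyshev
  have hint : Integrable (fun ω => (W ω) ^ 2) P := by
    refine (integrable_const (B ^ 2)).mono' ((hWmeas.pow_const 2).aestronglyMeasurable) ?_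
    filter_upwards [hW0, hWB] with ω h0 hb
    rw [Real.norm_eq_abs, abs_of_nonneg (by positivity)]
    nlinarith
  have hcheb : z ^ 2 * (P {ω | z ^ 2 ≤ (W ω) ^ 2}).toReal ≤ ∫ ω, (W ω) ^ 2 ∂P := by
    refine mul_meas_ge_le_integral_of_nonneg ?_ hint (z ^ 2)
    filter_upwards [hW0] with ω h0 using by positivity
  have hsub : P {ω | z ≤ W ω} ≤ P {ω | z ^ 2 ≤ (W ω) ^ 2} := by
    refine measure_mono fun ω hω => ?_
    simp only [Set.mem_setOf_eq] at *
    nlinarith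
  have hfin : P {ω | z ^ 2 ≤ (W ω) ^ 2} ≠ ⊤ := measure_ne_top _ _
  have hsub' : (P {ω | z ≤ W ω}).toReal ≤ (P {ω | z ^ 2 ≤ (W ω) ^ 2}).toReal :=
    ENNReal.toReal_mono hfin hsub
  have hmain : z ^ 2 * (P {ω | z ≤ W ω}).toReal ≤ B ^ 2 / 16 * Real.exp (-lam * B) := by
    calc z ^ 2 * (P {ω | z ≤ W ω}).toReal
        ≤ z ^ 2 * (P {ω | z ^ 2 ≤ (W ω) ^ 2}).toReal := by nlinarith
      _ ≤ ∫ ω, (W ω) ^ 2 ∂P := hcheb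
      _ ≤ _ := hmom
  -- numeric inequality: B^2/16 * exp(-lam*B) ≤ 2 * z^2 * exp(-lam*z)
  have hnum : B ^ 2 / 16 * Real.exp (-lam * B) ≤ 2 * z ^ 2 * Real.exp (-lam * z) := by
    set t := B / z with ht
    have ht1 : 1 ≤ t := (one_le_div hzpos).mpr hzB
    have hBt : B = t * z := by rw [ht, div_mul_cancel₀ B hzpos.ne']
    have hsplit : Real.exp (-lam * B) = Real.exp (-lam * z) * Real.exp (-(lam * (B - z))) := by
      rw [← Real.exp_add]; ring_nf
    have hexp1 : Real.exp (-(lam * (B - z))) ≤ Real.exp (-(Real.log 2 * (t - 1))) := by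
      apply Real.exp_le_exp.mpr
      have h1 : Real.log 2 * (t - 1) ≤ (lam * z) * (t - 1) := by
        apply mul_le_mul_of_nonneg_right (le_of_lt hsmall) (by linarith)
      have h2 : (lam * z) * (t - 1) = lam * (B - z) := by rw [hBt]; ring
      linarith [h1.trans_eq h2]
    have hexp2 : Real.exp (-(Real.log 2 * (t - 1))) = 2 * Real.exp (-(t * Real.log 2)) := by
      rw [show -(Real.log 2 * (t - 1)) = Real.log 2 + -(t * Real.log 2) by ring,
        Real.exp_add, Real.exp_log (by norm_num : (0:ℝ) < 2)]
    have hkey := key_ineq t ht1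
    have hepos : 0 < Real.exp (-(t * Real.log 2)) := Real.exp_pos _
    have hzepos : 0 < Real.exp (-lam * z) := Real.exp_pos _
    -- B^2 = t^2 z^2
    have : B ^ 2 * Real.exp (-(t * Real.log 2)) ≤ 16 * z ^ 2 := by
      have hE : Real.exp (-(t * Real.log 2)) = (Real.exp (t * Real.log 2))⁻¹ := by
        rw [← Real.exp_neg]
      rw [hBt, hE]
      have hle : t ^ 2 * z ^ 2 ≤ 16 * Real.exp (t * Real.log 2) * z ^ 2 := by
        nlinarith [sq_nonneg z]
      calc (t * z) ^ 2 * (Real.exp (t * Real.log 2))⁻¹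
          = (t ^ 2 * z ^ 2) * (Real.exp (t * Real.log 2))⁻¹ := by ring
        _ ≤ (16 * Real.exp (t * Real.log 2) * z ^ 2) * (Real.exp (t * Real.log 2))⁻¹ := by
            apply mul_le_mul_of_nonneg_right hle (by positivity)
        _ = 16 * z ^ 2 * (Real.exp (t * Real.log 2) * (Real.exp (t * Real.log 2))⁻¹) := by ring
        _ = 16 * z ^ 2 := by
            rw [mul_inv_cancel₀ (Real.exp_pos _).ne', mul_one]
    calc B ^ 2 / 16 * Real.exp (-lam * B)
        = B ^ 2 / 16 * (Real.exp (-lam * z) * Real.exp (-(lam * (B - z)))) := by rw [hsplit]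
      _ ≤ B ^ 2 / 16 * (Real.exp (-lam * z) * (2 * Real.exp (-(t * Real.log 2)))) := by
          apply mul_le_mul_of_nonneg_left _ (by positivity)
          rw [← hexp2]
          exact mul_le_mul_of_nonneg_left hexp1 (le_of_lt hzepos)
      _ = (B ^ 2 * Real.exp (-(t * Real.log 2))) * Real.exp (-lam * z) / 8 := by ring
      _ ≤ (16 * z ^ 2) * Real.exp (-lam * z) / 8 := by
          apply div_le_div_of_nonneg_right _ (by norm_num)
          exact mul_le_mul_of_nonneg_right this (le_of_lt hzepos)
      _ = 2 * z ^ 2 * Real.exp (-lam * z) := by ring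
  have hfinal : z ^ 2 * (P {ω | z ≤ W ω}).toReal ≤ 2 * z ^ 2 * Real.exp (-lam * z) :=
    hmain.trans hnum
  have hz2 : 0 < z ^ 2 := by positivity
  nlinarith [hfinal]
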